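/- Let J¹_{[I]}, J²_{[I]}, J³_{[I]} be the 8×8 real matrices obtained as the coefficient matrices of α₁, α₂, α₃ in the matrix Σₓ αₓ J^x_{[I]} whose rows are: row1 = (0,0,0, -α₁/2, -√3α₃/4, -α₂/4, √3α₂/4, -α₃/4); row2 = (0,0, α₁/2, 0, -α₃/4, -√3α₂/4, -α₂/4, √3α₃/4); row3 = (0, -α₁/2, 0, 0, -α₂/4, √3α₃/4, α₃/4, √3α₂/4); row4 = (α₁/2, 0,0,0, √3α₂/4, -α₃/4, √3α₃/4, α₂/4); row5 = (√3α₃/4, α₃/4, α₂/4, -√3α₂/4, 0, √3α₁/4, -α₁/4, 0); row6 = (α₂/4, √3α₂/4, -√3α₃/4, α₃/4, -√3α₁/4, 0, 0, α₁/4); row7 = (-√3α₂/4, α₂/4, -α₃/4, -√3α₃/4, α₁/4, 0, 0, √3α₁/4); row8 = (α₃/4, -√3α₃/4, -√3α₂/4, -α₂/4, 0, -α₁/4, -√3α₁/4, 0). Then each J^x_{[I]} is antisymmetric, they satisfy the su(2) commutation relations [J¹_{[I]}, J²_{[I]}] = J³_{[I]}, [J²_{[I]}, J³_{[I]}] = J¹_{[I]},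 [J³_{[I]}, J¹_{[I]}] = J²_{[I]}, and the Casimir is (J¹_{[I]})² + (J²_{[I]})² + (J³_{[I]})² = -(3/4)·1₈ (so ℝ⁸ carries the spin-1/2 representation with multiplicity four). -/
import Mathlib

noncomputable section

open Matrix

/-- The 8×8 matrix `Σₓ αₓ J^x_{[I]}` from the holonomy algebra of
`G_{2(2)}/(SU(2)×SU(2))`. -/
def JfamI (a1 a2 a3 : ℝ) : Matrix (Fin 8) (Fin 8) ℝ :=
  let s := Real.sqrt 3
  !![0, 0, 0, -a1/2, -s*a3/4, -a2/4, s*a2/4, -a3/4;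
     0, 0, a1/2, 0, -a3/4, -s*a2/4, -a2/4, s*a3/4;
     0, -a1/2, 0, 0, -a2/4, s*a3/4, a3/4, s*a2/4;
     a1/2, 0, 0, 0, s*a2/4, -a3/4, s*a3/4, a2/4;
     s*a3/4, a3/4, a2/4, -s*a2/4, 0, s*a1/4, -a1/4, 0;
     a2/4, s*a2/4, -s*a3/4, a3/4, -s*a1/4, 0, 0, a1/4;
     -s*a2/4, a2/4, -a3/4, -s*a3/4, a1/4, 0, 0, s*a1/4;
     a3/4, -s*a3/4, -s*a2/4, -a2/4, 0, -a1/4, -s*a1/4, 0]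

namespace Stmt6Aux

@[simp] lemma cv5 {α : Type*} {m : ℕ} (x : α) (u : Fin (m+5) → α) :
    Matrix.vecCons x u 5 = u 4 := rfl
@[simp] lemma cv6 {α : Type*} {m : ℕ} (x : α) (u : Fin (m+6) → α) :
    Matrix.vecCons x u 6 = u 5 := rfl
@[simp] lemma cv7 {α : Type*} {m : ℕ} (x : α) (u : Fin (m+7) → α) :
    Matrix.vecCons x u 7 = u 6 := rfl

def P1 : Matrix (Fin 8) (Fin 8) ℤ :=
  !![0, 0, 0, -2, 0, 0, 0, 0;
     0, 0, 2, 0, 0, 0, 0, 0;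
     0, -2, 0, 0, 0, 0, 0, 0;
     2, 0, 0, 0, 0, 0, 0, 0;
     0, 0, 0, 0, 0, 0, -1, 0;
     0, 0, 0, 0, 0, 0, 0, 1;
     0, 0, 0, 0, 1, 0, 0, 0;
     0, 0, 0, 0, 0, -1, 0, 0]
def Q1 : Matrix (Fin 8) (Fin 8) ℤ :=
  !![0, 0, 0, 0, 0, 0, 0, 0;
     0, 0, 0, 0, 0, 0, 0, 0;
     0, 0, 0, 0, 0, 0, 0, 0;
     0, 0, 0, 0, 0, 0, 0, 0;
     0, 0, 0, 0, 0, 1, 0, 0;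
     0, 0, 0, 0, -1, 0, 0, 0;
     0, 0, 0, 0, 0, 0, 0, 1;
     0, 0, 0, 0, 0, 0, -1, 0]
def P2 : Matrix (Fin 8) (Fin 8) ℤ :=
  !![0, 0, 0, 0, 0, -1, 0, 0;
     0, 0, 0, 0, 0, 0, -1, 0;
     0, 0, 0, 0, -1, 0, 0, 0;
     0, 0, 0, 0, 0, 0, 0, 1;
     0, 0, 1, 0, 0, 0, 0, 0;
     1, 0, 0, 0, 0, 0, 0, 0;
     0, 1, 0, 0, 0, 0, 0, 0;
     0, 0, 0, -1, 0, 0, 0, 0]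
def Q2 : Matrix (Fin 8) (Fin 8) ℤ :=
  !![0, 0, 0, 0, 0, 0, 1, 0;
     0, 0, 0, 0, 0, -1, 0, 0;
     0, 0, 0, 0, 0, 0, 0, 1;
     0, 0, 0, 0, 1, 0, 0, 0;
     0, 0, 0, -1, 0, 0, 0, 0;
     0, 1, 0, 0, 0, 0, 0, 0;
     -1, 0, 0, 0, 0, 0, 0, 0;
     0, 0, -1, 0, 0, 0, 0, 0]
def P3 : Matrix (Fin 8) (Fin 8) ℤ :=
  !![0, 0, 0, 0, 0, 0, 0, -1;
     0, 0, 0, 0, -1, 0, 0, 0;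
     0, 0, 0, 0, 0, 0, 1, 0;
     0, 0, 0, 0, 0, -1, 0, 0;
     0, 1, 0, 0, 0, 0, 0, 0;
     0, 0, 0, 1, 0, 0, 0, 0;
     0, 0, -1, 0, 0, 0, 0, 0;
     1, 0, 0, 0, 0, 0, 0, 0]
def Q3 : Matrix (Fin 8) (Fin 8) ℤ :=
  !![0, 0, 0, 0, -1, 0, 0, 0;
     0, 0, 0, 0, 0, 0, 0, 1;
     0, 0, 0, 0, 0, 1, 0, 0;
     0, 0, 0, 0, 0, 0, 1, 0;
     1, 0, 0, 0, 0, 0, 0, 0;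
     0, 0, -1, 0, 0, 0, 0, 0;
     0, 0, 0, -1, 0, 0, 0, 0;
     0, -1, 0, 0, 0, 0, 0, 0]

-- integer identities, verified by kernel computation
lemma zT1 : P1ᵀ = -P1 := by decide
lemma zT2 : P2ᵀ = -P2 := by decide
lemma zT3 : P3ᵀ = -P3 := by decide
lemma zT4 : Q1ᵀ = -Q1 := by decide
lemma zT5 : Q2ᵀ = -Q2 := by decide
lemma zT6 : Q3ᵀ = -Q3 := by decide

lemma z12a : P1*P2 - P2*P1 + (3:ℤ)•(Q1*Q2 - Q2*Q1) = (4:ℤ)•P3 := by decide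
lemma z12b : P1*Q2 + Q1*P2 - (P2*Q1 + Q2*P1) = (4:ℤ)•Q3 := by decide
lemma z23a : P2*P3 - P3*P2 + (3:ℤ)•(Q2*Q3 - Q3*Q2) = (4:ℤ)•P1 := by decide
lemma z23b : P2*Q3 + Q2*P3 - (P3*Q2 + Q3*P2) = (4:ℤ)•Q1 := by decide
lemma z31a : P3*P1 - P1*P3 + (3:ℤ)•(Q3*Q1 - Q1*Q3) = (4:ℤ)•P2 := by decide
lemma z31b : P3*Q1 + Q3*P1 - (P1*Q3 + Q1*P3) = (4:ℤ)•Q2 := by decide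
lemma zcasa : P1*P1 + P2*P2 + P3*P3 + (3:ℤ)•(Q1*Q1 + Q2*Q2 + Q3*Q3)
    = -((12:ℤ)•(1 : Matrix (Fin 8) (Fin 8) ℤ)) := by decide
lemma zcasb : P1*Q1 + Q1*P1 + (P2*Q2 + Q2*P2) + (P3*Q3 + Q3*P3) = 0 := by decide

/-- cast ring hom on matrices -/
def φ : Matrix (Fin 8) (Fin 8) ℤ →+* Matrix (Fin 8) (Fin 8) ℝ :=
  (Int.castRingHom ℝ).mapMatrix

def p1 : Matrix (Fin 8) (Fin 8) ℝ := φ P1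
def q1 : Matrix (Fin 8) (Fin 8) ℝ := φ Q1
def p2 : Matrix (Fin 8) (Fin 8) ℝ := φ P2
def q2 : Matrix (Fin 8) (Fin 8) ℝ := φ Q2
def p3 : Matrix (Fin 8) (Fin 8) ℝ := φ P3
def q3 : Matrix (Fin 8) (Fin 8) ℝ := φ Q3

lemma rT1 : p1ᵀ = -p1 := by
  have := congrArg φ zT1
  simpa [φ, p1, Matrix.transpose_map, map_neg] using this
lemma rT2 : p2ᵀ = -p2 := by
  have := congrArg φ zT2
  simpa [φ, p2, Matrix.transpose_map, map_neg] using this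
lemma rT3 : p3ᵀ = -p3 := by
  have := congrArg φ zT3
  simpa [φ, p3, Matrix.transpose_map, map_neg] using this
lemma rT4 : q1ᵀ = -q1 := by
  have := congrArg φ zT4
  simpa [φ, q1, Matrix.transpose_map, map_neg] using this
lemma rT5 : q2ᵀ = -q2 := by
  have := congrArg φ zT5
  simpa [φ, q2, Matrix.transpose_map, map_neg] using this
lemma rT6 : q3ᵀ = -q3 := by
  have := congrArg φ zT6
  simpa [φ, q3, Matrix.transpose_map, map_neg] using this

lemma r12a : p1*p2 - p2*p1 + (3:ℤ)•(q1*q2 - q2*q1) = (4:ℤ)•p3 := by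
  have := congrArg φ z12a
  simpa only [p1, p2, p3, q1, q2, q3, map_add, map_sub, _root_.map_mul, map_zsmul, map_zero] using this
lemma r12b : p1*q2 + q1*p2 - (p2*q1 + q2*p1) = (4:ℤ)•q3 := by
  have := congrArg φ z12b
  simpa only [p1, p2, p3, q1, q2, q3, map_add, map_sub, _root_.map_mul, map_zsmul, map_zero] using this
lemma r23a : p2*p3 - p3*p2 + (3:ℤ)•(q2*q3 - q3*q2) = (4:ℤ)•p1 := by
  have := congrArg φ z23a
  simpa only [p1, p2, p3, q1, q2, q3, map_add, map_sub, _root_.map_mul, map_zsmul, map_zero] using this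
lemma r23b : p2*q3 + q2*p3 - (p3*q2 + q3*p2) = (4:ℤ)•q1 := by
  have := congrArg φ z23b
  simpa only [p1, p2, p3, q1, q2, q3, map_add, map_sub, _root_.map_mul, map_zsmul, map_zero] using this
lemma r31a : p3*p1 - p1*p3 + (3:ℤ)•(q3*q1 - q1*q3) = (4:ℤ)•p2 := by
  have := congrArg φ z31a
  simpa only [p1, p2, p3, q1, q2, q3, map_add, map_sub, _root_.map_mul, map_zsmul, map_zero] using this
lemma r31b : p3*q1 + q3*p1 - (p1*q3 + q1*p3) = (4:ℤ)•q2 := by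
  have := congrArg φ z31b
  simpa only [p1, p2, p3, q1, q2, q3, map_add, map_sub, _root_.map_mul, map_zsmul, map_zero] using this
lemma rcasa : p1*p1 + p2*p2 + p3*p3 + (3:ℤ)•(q1*q1 + q2*q2 + q3*q3)
    = -((12:ℤ)•(1 : Matrix (Fin 8) (Fin 8) ℝ)) := by
  have := congrArg φ zcasa
  simpa only [p1, p2, p3, q1, q2, q3, map_add, map_sub, _root_.map_mul, map_zsmul, map_neg, _root_.map_one] using this
lemma rcasb : p1*q1 + q1*p1 + (p2*q2 + q2*p2) + (p3*q3 + q3*p3) = 0 := by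
  have := congrArg φ zcasb
  simpa only [p1, p2, p3, q1, q2, q3, map_add, map_sub, _root_.map_mul, map_zsmul, map_zero] using this

/-- the real coefficient matrices -/
def k (p q : Matrix (Fin 8) (Fin 8) ℝ) : Matrix (Fin 8) (Fin 8) ℝ :=
  (1/4 : ℝ) • (p + Real.sqrt 3 • q)

lemma hs : Real.sqrt 3 * Real.sqrt 3 = 3 := Real.mul_self_sqrt (by norm_num)

lemma expand (P Q P' Q' : Matrix (Fin 8) (Fin 8) ℝ) :
    (P + Real.sqrt 3 • Q) * (P' + Real.sqrt 3 • Q')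
      = (P*P' + (3:ℝ)•(Q*Q')) + Real.sqrt 3 • (P*Q' + Q*P') := by
  simp only [add_mul, mul_add, smul_mul_assoc, mul_smul_comm, smul_smul, hs, smul_add]
  module

lemma k_mul (P Q P' Q' : Matrix (Fin 8) (Fin 8) ℝ) :
    k P Q * k P' Q' = (1/16 : ℝ) •
      ((P*P' + (3:ℝ)•(Q*Q')) + Real.sqrt 3 • (P*Q' + Q*P')) := by
  rw [k, k, smul_mul_assoc, mul_smul_comm, smul_smul, expand]
  norm_num

lemma kT (P Q : Matrix (Fin 8) (Fin 8) ℝ) (hP : Pᵀ = -P) (hQ : Qᵀ = -Q) :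
    (k P Q)ᵀ = -(k P Q) := by
  rw [k, transpose_smul, transpose_add, transpose_smul, hP, hQ]
  module

lemma comm_helper (P Q P' Q' P'' Q'' : Matrix (Fin 8) (Fin 8) ℝ)
    (ha : P*P' - P'*P + (3:ℤ)•(Q*Q' - Q'*Q) = (4:ℤ)•P'')
    (hb : P*Q' + Q*P' - (P'*Q + Q'*P) = (4:ℤ)•Q'') :
    k P Q * k P' Q' - k P' Q' * k P Q = k P'' Q'' := by
  rw [k_mul, k_mul, k]
  have ha' : P*P' - P'*P + (3:ℝ)•(Q*Q' - Q'*Q) = (4:ℝ)•P'' := by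
    rw [show ((3:ℝ) = ((3:ℤ):ℝ)) by norm_num, show ((4:ℝ) = ((4:ℤ):ℝ)) by norm_num,
      Int.cast_smul_eq_zsmul, Int.cast_smul_eq_zsmul]
    exact ha
  have hb' : P*Q' + Q*P' - (P'*Q + Q'*P) = (4:ℝ)•Q'' := by
    rw [show ((4:ℝ) = ((4:ℤ):ℝ)) by norm_num, Int.cast_smul_eq_zsmul]
    exact hb
  linear_combination (norm := module) (1/16 : ℝ) • ha' + (Real.sqrt 3/16) • hb'

lemma cas_helper :
    k p1 q1 * k p1 q1 + k p2 q2 * k p2 q2 + k p3 q3 * k p3 q3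
      = -((3/4 : ℝ) • (1 : Matrix (Fin 8) (Fin 8) ℝ)) := by
  rw [k_mul, k_mul, k_mul]
  have ha' : p1*p1 + p2*p2 + p3*p3 + (3:ℝ)•(q1*q1 + q2*q2 + q3*q3)
      = -((12:ℝ)•(1 : Matrix (Fin 8) (Fin 8) ℝ)) := by
    rw [show ((3:ℝ) = ((3:ℤ):ℝ)) by norm_num, show ((12:ℝ) = ((12:ℤ):ℝ)) by norm_num,
      Int.cast_smul_eq_zsmul, Int.cast_smul_eq_zsmul]
    exact rcasa
  have hb' := rcasb
  linear_combination (norm := module) (1/16 : ℝ) • ha' + (Real.sqrt 3/16) • hb'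

set_option maxHeartbeats 1000000 in
lemma e1 : JfamI 1 0 0 = k p1 q1 := by
  ext i j
  fin_cases i <;> fin_cases j <;>
    norm_num [JfamI, k, p1, q1, P1, Q1, φ, RingHom.mapMatrix_apply, Matrix.map_apply,
      Matrix.smul_apply, Matrix.add_apply, Matrix.vecHead, Matrix.vecTail] <;> ring

set_option maxHeartbeats 1000000 in
lemma e2 : JfamI 0 1 0 = k p2 q2 := by
  ext i j
  fin_cases i <;> fin_cases j <;>
    norm_num [JfamI, k, p2, q2, P2, Q2, φ, RingHom.mapMatrix_apply, Matrix.map_apply,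
      Matrix.smul_apply, Matrix.add_apply, Matrix.vecHead, Matrix.vecTail] <;> ring

set_option maxHeartbeats 1000000 in
lemma e3 : JfamI 0 0 1 = k p3 q3 := by
  ext i j
  fin_cases i <;> fin_cases j <;>
    norm_num [JfamI, k, p3, q3, P3, Q3, φ, RingHom.mapMatrix_apply, Matrix.map_apply,
      Matrix.smul_apply, Matrix.add_apply, Matrix.vecHead, Matrix.vecTail] <;> ring

end Stmt6Aux

open Stmt6Aux in
/-- the coefficient matrices `J¹_{[I]}, J²_{[I]}, J³_{[I]}` of
`α₁, α₂, α₃` in `Σₓ αₓ J^x_{[I]}` are antisymmetric, satisfy the `su(2)`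
commutation relations, and have Casimir `-(3/4)·1₈`. -/
theorem stmt_6 (J1 J2 J3 : Matrix (Fin 8) (Fin 8) ℝ)
    (hJ : ∀ a1 a2 a3 : ℝ, a1 • J1 + a2 • J2 + a3 • J3 = JfamI a1 a2 a3) :
    (J1ᵀ = -J1 ∧ J2ᵀ = -J2 ∧ J3ᵀ = -J3) ∧
    (J1 * J2 - J2 * J1 = J3 ∧ J2 * J3 - J3 * J2 = J1 ∧ J3 * J1 - J1 * J3 = J2) ∧
    J1 * J1 + J2 * J2 + J3 * J3 = -((3/4 : ℝ) • (1 : Matrix (Fin 8) (Fin 8) ℝ)) := by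
  have h1 : J1 = k p1 q1 := by
    have := hJ 1 0 0; rw [e1] at this; simpa using this
  have h2 : J2 = k p2 q2 := by
    have := hJ 0 1 0; rw [e2] at this; simpa using this
  have h3 : J3 = k p3 q3 := by
    have := hJ 0 0 1; rw [e3] at this; simpa using this
  subst h1 h2 h3
  exact ⟨⟨kT _ _ rT1 rT4, kT _ _ rT2 rT5, kT _ _ rT3 rT6⟩,
    ⟨comm_helper _ _ _ _ _ _ r12a r12b, comm_helper _ _ _ _ _ _ r23a r23b,
     comm_helper _ _ _ _ _ _ r31a r31b⟩,
    cas_helper⟩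

end
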